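/- For every integer r ≥ 2 and every integer n ≥ r+1, the right-down diagonal sequence d_n^{(r)} = F_{n−r+2} · S(n, n−r+1) of the Fibonacci-Fubini triangle satisfies F_{n−r+1} · d_n^{(r)} = F_{n−r+2} · d_{n−1}^{(r)} + (n−r+1) · F_{n−r+1} · d_{n−1}^{(r−1)}. -/
import Mathlib


/-- Stirling numbers of the second kind. -/
def stirling2 : ℕ → ℕ → ℕ
  | 0, 0 => 1
  | 0, _ + 1 => 0
  | _ + 1, 0 => 0
  | n + 1, k + 1 => stirling2 n k + (k + 1) * stirling2 n (k + 1)

/-- The `r`-th right-down diagonal of the Fibonacci-Fubini triangle: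
`d_n^{(r)} = T(n, n-r+1) = F_{n-r+2} · S(n, n-r+1)`. -/
def fibFubiniD (r n : ℕ) : ℕ := Nat.fib (n - r + 2) * stirling2 n (n - r + 1)

/-- Recurrence relating consecutive right-down diagonals of the Fibonacci-Fubini triangle. -/
theorem fibFubiniD_recurrence (r : ℕ) (hr : 2 ≤ r) (n : ℕ) (hn : r + 1 ≤ n) :
    Nat.fib (n - r + 1) * fibFubiniD r n =
      Nat.fib (n - r + 2) * fibFubiniD r (n - 1) +
        (n - r + 1) * Nat.fib (n - r + 1) * fibFubiniD (r - 1) (n - 1) := by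
  obtain ⟨k, rfl⟩ : ∃ k, n = r + 1 + k := ⟨n - (r + 1), by omega⟩
  obtain ⟨s, rfl⟩ : ∃ s, r = s + 2 := ⟨r - 2, by omega⟩
  unfold fibFubiniD
  have h1 : s + 2 + 1 + k - (s + 2) = k + 1 := by omega
  have h2 : s + 2 + 1 + k - 1 = s + 2 + k := by omega
  have h3 : s + 2 + k - (s + 2) = k := by omega
  have h4 : s + 2 + k - (s + 2 - 1) = k + 1 := by omega
  rw [h1, h2, h3, h4]
  have hs : stirling2 (s + 2 + 1 + k) (k + 1 + 1) =
      stirling2 (s + 2 + k) (k + 1) + (k + 1 + 1) * stirling2 (s + 2 + k) (k + 1 + 1) := by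
    have h5 : s + 2 + 1 + k = (s + 2 + k) + 1 := by ring
    rw [h5, stirling2]
  rw [hs]
  ring
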